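/- For every γ ≥ −1/2, setting k = ⌊γ + 1/2⌋, there exist an even entire function ω : ℂ → ℂ of exponential type 2 (i.e., for every ε > 0 there is c_ε with |ω(z)| ≤ c_ε e^{(2+ε)|z|} for all z ∈ ℂ) which is real-valued and nonnegative on [0,∞), and constants 0 < c_1 ≤ c_2, such that c_1 x^{2k+2} ≤ ω(x) ≤ c_2 x^{2k+2} for all 0 ≤ x ≤ 1 and c_1 x^{2γ+1} ≤ ω(x) ≤ c_2 x^{2γ+1} for all x ≥ 1. -/

import Mathlib

set_option maxHeartbeats 1000000

open scoped NNReal ENNReal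
open MeasureTheory intervalIntegral Set

noncomputable section

namespace Stmt16

lemma norm_cos_le' (w : ℂ) : ‖Complex.cos w‖ ≤ Real.exp ‖w‖ := by
  rw [Complex.cos]
  calc ‖(Complex.exp (w*Complex.I) + Complex.exp (-w*Complex.I))/2‖
      ≤ (‖Complex.exp (w*Complex.I)‖ + ‖Complex.exp (-w*Complex.I)‖)/2 := by
        rw [norm_div, Complex.norm_two]; gcongr; exact norm_add_le _ _
    _ ≤ (Real.exp ‖w‖ + Real.exp ‖w‖)/2 := by
        gcongr <;> rw [Complex.norm_exp] <;> apply Real.exp_le_exp.2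
        · simp only [Complex.mul_re, Complex.I_re, Complex.I_im, mul_zero, mul_one, zero_sub]
          have := abs_le.1 (Complex.abs_im_le_norm w); linarith [this.1]
        · simp only [Complex.neg_re, Complex.mul_re, Complex.I_re, Complex.I_im, mul_zero,
            mul_one, zero_sub, neg_neg, Complex.neg_im]
          have := abs_le.1 (Complex.abs_im_le_norm w); linarith [this.2]
    _ = Real.exp ‖w‖ := by ring

lemma norm_sin_le' (w : ℂ) : ‖Complex.sin w‖ ≤ ‖w‖ * Real.exp ‖w‖ := by
  have h : Complex.sin w = ∫ t in (0:ℝ)..1, w * Complex.cos (t * w) := by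
    have : ∀ t ∈ Set.uIcc (0:ℝ) 1, HasDerivAt (fun s : ℝ => Complex.sin (s * w))
        (w * Complex.cos (t * w)) t := by
      intro t _
      have h1 : HasDerivAt (fun u : ℂ => Complex.sin (u * w)) (w * Complex.cos (t * w)) t := by
        simpa [mul_comm, Function.comp_def] using (Complex.hasDerivAt_sin ((t:ℂ) * w)).comp (t:ℂ)
          ((hasDerivAt_id (t:ℂ)).mul_const w)
      exact h1.comp_ofReal
    have := intervalIntegral.integral_eq_sub_of_hasDerivAt this ?_
    · simpa using this.symm
    · apply Continuous.intervalIntegrable; continuity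
  rw [h]
  have := intervalIntegral.norm_integral_le_of_norm_le_const (C := ‖w‖ * Real.exp ‖w‖)
    (a := (0:ℝ)) (b := 1) (f := fun t => w * Complex.cos (t * w)) ?_
  · simpa using this
  · intro t ht
    rw [Set.uIoc_of_le zero_le_one] at ht
    rw [norm_mul]
    gcongr
    calc ‖Complex.cos (t * w)‖ ≤ Real.exp ‖(t:ℂ) * w‖ := norm_cos_le' _
      _ ≤ Real.exp ‖w‖ := by
          apply Real.exp_le_exp.2; rw [norm_mul]
          have h1 : ‖(t:ℂ)‖ ≤ 1 := by
            rw [Complex.norm_real, Real.norm_eq_abs, abs_le]; constructor <;> linarith [ht.1, ht.2]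
          nlinarith [norm_nonneg w]

def itg (α : ℝ) (z : ℂ) (t : ℝ) : ℂ := Complex.sin (t * z) ^ 2 * ((t ^ α : ℝ) : ℂ)

def Hf (α : ℝ) (z : ℂ) : ℂ := ∫ t in Set.Ioc (0:ℝ) 1, itg α z t

def Hr (α : ℝ) (x : ℝ) : ℝ := ∫ t in Set.Ioc (0:ℝ) 1, Real.sin (t * x) ^ 2 * t ^ α

lemma itg_meas (α : ℝ) (z : ℂ) : AEStronglyMeasurable (itg α z) (volume.restrict (Ioc (0:ℝ) 1)) := by
  apply Measurable.aestronglyMeasurable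
  unfold itg
  apply Measurable.mul
  · exact (Complex.measurable_sin.comp ((Complex.measurable_ofReal).mul_const z)).pow_const 2
  · apply Complex.measurable_ofReal.comp
    measurability

lemma norm_itg_le (α : ℝ) (z : ℂ) {t : ℝ} (ht : t ∈ Ioc (0:ℝ) 1) :
    ‖itg α z t‖ ≤ t ^ (α + 2) * (‖z‖ * Real.exp ‖z‖) ^ 2 := by
  obtain ⟨ht0, ht1⟩ := ht
  have htz : ‖(t : ℂ) * z‖ = t * ‖z‖ := by
    rw [norm_mul, Complex.norm_real, Real.norm_eq_abs, abs_of_pos ht0]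
  have hsin : ‖Complex.sin ((t:ℂ) * z)‖ ≤ t * (‖z‖ * Real.exp ‖z‖) := by
    calc ‖Complex.sin ((t:ℂ) * z)‖ ≤ ‖(t:ℂ)*z‖ * Real.exp ‖(t:ℂ)*z‖ := norm_sin_le' _
      _ ≤ (t * ‖z‖) * Real.exp ‖z‖ := by
          rw [htz]
          have h1 : t * ‖z‖ ≤ ‖z‖ := by nlinarith [norm_nonneg z]
          have h2 : 0 ≤ t * ‖z‖ := by positivity
          exact mul_le_mul_of_nonneg_left (Real.exp_le_exp.2 h1) h2
      _ = t * (‖z‖ * Real.exp ‖z‖) := by ring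
  have h2 : ‖itg α z t‖ ≤ (t * (‖z‖ * Real.exp ‖z‖))^2 * t ^ α := by
    rw [itg, norm_mul, norm_pow, Complex.norm_real, Real.norm_eq_abs,
      abs_of_nonneg (Real.rpow_nonneg ht0.le α)]
    have h0 : 0 ≤ t ^ α := Real.rpow_nonneg ht0.le α
    apply mul_le_mul_of_nonneg_right _ h0
    have := pow_le_pow_left₀ (norm_nonneg _) hsin 2
    simpa using this
  calc ‖itg α z t‖ ≤ (t * (‖z‖ * Real.exp ‖z‖))^2 * t ^ α := h2
    _ = t ^ (α + 2) * (‖z‖ * Real.exp ‖z‖) ^ 2 := by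
        rw [mul_pow, Real.rpow_add ht0, Real.rpow_two]
        ring

lemma bound_integrable (α : ℝ) (hα : -3 < α) (C : ℝ) :
    IntegrableOn (fun t : ℝ => t ^ (α + 2) * C) (Ioc (0:ℝ) 1) := by
  apply Integrable.mul_const
  exact (intervalIntegrable_iff_integrableOn_Ioc_of_le zero_le_one).1
    (intervalIntegral.intervalIntegrable_rpow' (by linarith))

lemma itg_integrable (α : ℝ) (hα : -3 < α) (z : ℂ) :
    IntegrableOn (itg α z) (Ioc (0:ℝ) 1) := by
  apply Integrable.mono' (bound_integrable α hα ((‖z‖ * Real.exp ‖z‖)^2)) (itg_meas α z)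
  exact (ae_restrict_iff' measurableSet_Ioc).2 (Filter.Eventually.of_forall
    (fun t ht => norm_itg_le α z ht))

lemma integral_bound (α : ℝ) (hα : -3 < α) (C : ℝ) (hC : 0 ≤ C) :
    ∫ t in Ioc (0:ℝ) 1, t ^ (α + 2) * C = C / (α + 3) := by
  rw [← intervalIntegral.integral_of_le zero_le_one, intervalIntegral.integral_mul_const,
    integral_rpow (Or.inl (by linarith))]
  rw [Real.one_rpow, Real.zero_rpow (by linarith)]
  field_simp
  ring

lemma norm_Hf_le (α : ℝ) (hα : -3 < α) (z : ℂ) :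
    ‖Hf α z‖ ≤ (‖z‖ * Real.exp ‖z‖) ^ 2 / (α + 3) := by
  rw [Hf, ← integral_bound α hα _ (by positivity)]
  apply MeasureTheory.norm_integral_le_of_norm_le (bound_integrable α hα _)
  exact (ae_restrict_iff' measurableSet_Ioc).2 (Filter.Eventually.of_forall
    (fun t ht => norm_itg_le α z ht))


def itg' (α : ℝ) (z : ℂ) (t : ℝ) : ℂ :=
  (2 * Complex.sin (t * z) * ((t:ℂ) * Complex.cos (t * z))) * ((t ^ α : ℝ) : ℂ)

lemma itg'_meas (α : ℝ) (z : ℂ) :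
    AEStronglyMeasurable (itg' α z) (volume.restrict (Ioc (0:ℝ) 1)) := by
  apply Measurable.aestronglyMeasurable
  unfold itg'
  apply Measurable.mul
  · apply Measurable.mul
    · exact (Complex.measurable_sin.comp ((Complex.measurable_ofReal).mul_const z)).const_mul 2
    · exact Complex.measurable_ofReal.mul
        (Complex.measurable_cos.comp ((Complex.measurable_ofReal).mul_const z))
  · apply Complex.measurable_ofReal.comp
    measurability

lemma itg_hasDerivAt (α : ℝ) (t : ℝ) (z : ℂ) :
    HasDerivAt (fun w => itg α w t) (itg' α z t) z := by
  have hm : HasDerivAt (fun w : ℂ => (t:ℂ) * w) (t:ℂ) z := by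
    simpa using (hasDerivAt_id z).const_mul (t:ℂ)
  have h1 : HasDerivAt (fun w : ℂ => Complex.sin ((t:ℂ) * w)) ((t:ℂ) * Complex.cos ((t:ℂ) * z)) z := by
    have h3 := (Complex.hasDerivAt_sin ((t:ℂ) * z)).comp z hm
    exact h3.congr_deriv (by ring)
  have h2 := (h1.pow 2).mul_const ((t ^ α : ℝ) : ℂ)
  unfold itg itg'
  exact h2.congr_deriv (by push_cast; ring)

lemma norm_itg'_le (α : ℝ) (z : ℂ) {t : ℝ} (ht : t ∈ Ioc (0:ℝ) 1) (R : ℝ) (hR : ‖z‖ ≤ R) :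
    ‖itg' α z t‖ ≤ t ^ (α + 2) * (2 * R * Real.exp R ^ 2) := by
  obtain ⟨ht0, ht1⟩ := ht
  have hR0 : 0 ≤ R := le_trans (norm_nonneg z) hR
  have htz : ‖(t : ℂ) * z‖ = t * ‖z‖ := by
    rw [norm_mul, Complex.norm_real, Real.norm_eq_abs, abs_of_pos ht0]
  have htzR : ‖(t:ℂ) * z‖ ≤ R := by
    rw [htz]; nlinarith [norm_nonneg z]
  have hsin : ‖Complex.sin ((t:ℂ) * z)‖ ≤ t * R * Real.exp R :=
    calc ‖Complex.sin ((t:ℂ) * z)‖ ≤ ‖(t:ℂ)*z‖ * Real.exp ‖(t:ℂ)*z‖ := norm_sin_le' _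
      _ ≤ (t * R) * Real.exp R := by
          apply mul_le_mul _ (Real.exp_le_exp.2 htzR) (Real.exp_nonneg _) (by positivity)
          rw [htz]; nlinarith [norm_nonneg z]
      _ = t * R * Real.exp R := rfl
  have hcos : ‖Complex.cos ((t:ℂ) * z)‖ ≤ Real.exp R :=
    le_trans (norm_cos_le' _) (Real.exp_le_exp.2 htzR)
  have hnt : ‖(t:ℂ)‖ = t := by rw [Complex.norm_real, Real.norm_eq_abs, abs_of_pos ht0]
  have h0 : 0 ≤ t ^ α := Real.rpow_nonneg ht0.le α
  calc ‖itg' α z t‖ = 2 * ‖Complex.sin ((t:ℂ)*z)‖ * (t * ‖Complex.cos ((t:ℂ)*z)‖) * t ^ α := by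
        rw [itg', norm_mul, norm_mul, norm_mul, norm_mul, hnt, Complex.norm_real,
          Real.norm_eq_abs, abs_of_nonneg (Real.rpow_nonneg ht0.le α)]
        norm_num
    _ ≤ 2 * (t * R * Real.exp R) * (t * Real.exp R) * t ^ α := by
        have h2 : 0 ≤ ‖Complex.sin ((t:ℂ)*z)‖ := norm_nonneg _
        have h3 : t * ‖Complex.cos ((t:ℂ)*z)‖ ≤ t * Real.exp R :=
          mul_le_mul_of_nonneg_left hcos ht0.le
        apply mul_le_mul_of_nonneg_right _ h0
        apply mul_le_mul (by nlinarith) h3 (by positivity) (by positivity)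
    _ = (t^2 * t ^ α) * (2 * R * Real.exp R ^ 2) := by ring
    _ = t ^ (α + 2) * (2 * R * Real.exp R ^ 2) := by
        rw [Real.rpow_add ht0, Real.rpow_two]; ring

lemma Hf_differentiable (α : ℝ) (hα : -3 < α) : Differentiable ℂ (Hf α) := by
  intro z₀
  have h1 : ∀ᶠ z in nhds z₀, AEStronglyMeasurable (itg α z) (volume.restrict (Ioc (0:ℝ) 1)) :=
    Filter.Eventually.of_forall (fun z => itg_meas α z)
  have h2 : Integrable (itg α z₀) (volume.restrict (Ioc (0:ℝ) 1)) := itg_integrable α hα z₀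
  have h3 : AEStronglyMeasurable (itg' α z₀) (volume.restrict (Ioc (0:ℝ) 1)) := itg'_meas α z₀
  have h4 : ∀ᵐ t ∂(volume.restrict (Ioc (0:ℝ) 1)), ∀ z ∈ Metric.ball z₀ 1,
      ‖itg' α z t‖ ≤ t ^ (α + 2) * (2 * (‖z₀‖ + 1) * Real.exp (‖z₀‖ + 1) ^ 2) := by
    apply (ae_restrict_iff' measurableSet_Ioc).2
    apply Filter.Eventually.of_forall
    intro t ht z hz
    apply norm_itg'_le α z ht
    have hd := mem_ball_iff_norm.1 hz
    calc ‖z‖ = ‖z₀ + (z - z₀)‖ := by ring_nf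
      _ ≤ ‖z₀‖ + ‖z - z₀‖ := norm_add_le _ _
      _ ≤ ‖z₀‖ + 1 := by linarith
  have h5 : Integrable (fun t : ℝ => t ^ (α + 2) * (2 * (‖z₀‖ + 1) * Real.exp (‖z₀‖ + 1) ^ 2))
      (volume.restrict (Ioc (0:ℝ) 1)) := bound_integrable α hα _
  have h6 : ∀ᵐ t ∂(volume.restrict (Ioc (0:ℝ) 1)), ∀ z ∈ Metric.ball z₀ 1,
      HasDerivAt (fun w => itg α w t) (itg' α z t) z := by
    apply Filter.Eventually.of_forall
    intro t z _
    exact itg_hasDerivAt α t z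
  have key := _root_.hasDerivAt_integral_of_dominated_loc_of_deriv_le (Metric.ball_mem_nhds z₀ one_pos) h1 h2 h3 h4 h5 h6
  exact key.2.differentiableAt

lemma Hf_analytic (α : ℝ) (hα : -3 < α) : AnalyticOnNhd ℂ (Hf α) Set.univ :=
  (Hf_differentiable α hα).differentiableOn.analyticOnNhd isOpen_univ

lemma Hf_even (α : ℝ) (z : ℂ) : Hf α (-z) = Hf α z := by
  unfold Hf itg
  congr 1
  ext t
  rw [mul_neg, Complex.sin_neg]
  ring

lemma Hf_real (α : ℝ) (x : ℝ) : Hf α x = ((Hr α x : ℝ) : ℂ) := by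
  have heq : ∀ t : ℝ, itg α (x:ℂ) t = ((Real.sin (t*x)^2 * t^α : ℝ) : ℂ) := by
    intro t; unfold itg; push_cast; ring
  unfold Hf Hr
  calc ∫ t in Ioc (0:ℝ) 1, itg α ↑x t
      = ∫ t in Ioc (0:ℝ) 1, ((Real.sin (t*x)^2 * t^α : ℝ):ℂ) := by simp_rw [heq]
    _ = _ := integral_ofReal


lemma rint_meas (α x : ℝ) : Measurable (fun t : ℝ => Real.sin (t*x)^2 * t^α) := by
  measurability

lemma sin_mul_sq_rpow_le (α : ℝ) {x t : ℝ} (ht0 : 0 < t) :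
    Real.sin (t*x)^2 * t^α ≤ x^2 * t^(α+2) := by
  have h0 : 0 ≤ t ^ α := Real.rpow_nonneg ht0.le α
  calc Real.sin (t*x)^2 * t^α ≤ (t*x)^2 * t^α :=
        mul_le_mul_of_nonneg_right Real.sin_sq_le_sq h0
    _ = x^2 * t^(α+2) := by rw [Real.rpow_add ht0, Real.rpow_two]; ring

lemma rint_integrableOn (α : ℝ) (hα : -3 < α) (x : ℝ) {a b : ℝ} (ha : 0 ≤ a) (hb : b ≤ 1)
    (hab : a ≤ b) : IntegrableOn (fun t : ℝ => Real.sin (t*x)^2 * t^α) (Ioc a b) := by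
  apply IntegrableOn.mono_set (t := Ioc (0:ℝ) 1) _ (Ioc_subset_Ioc ha hb)
  apply Integrable.mono' (g := fun t : ℝ => x^2 * t^(α+2))
  · apply Integrable.const_mul
    exact (intervalIntegrable_iff_integrableOn_Ioc_of_le zero_le_one).1
      (intervalIntegral.intervalIntegrable_rpow' (by linarith))
  · exact (rint_meas α x).aestronglyMeasurable
  · apply (ae_restrict_iff' measurableSet_Ioc).2
    apply Filter.Eventually.of_forall
    intro t ht
    have h0 : 0 ≤ t ^ α := Real.rpow_nonneg ht.1.le α
    rw [Real.norm_eq_abs, abs_of_nonneg (by positivity)]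
    exact sin_mul_sq_rpow_le α ht.1

lemma rpow_integrableOn (p : ℝ) (hp : -1 < p) {a b : ℝ} :
    IntegrableOn (fun t : ℝ => t^p) (Ioc a b) := by
  rcases le_or_gt a b with h|h
  · exact (intervalIntegrable_iff_integrableOn_Ioc_of_le h).1
      (intervalIntegral.intervalIntegrable_rpow' hp)
  · rw [Ioc_eq_empty (by exact not_lt.2 h.le)]
    exact integrableOn_empty

lemma Hr_eq_interval (α x : ℝ) : Hr α x = ∫ t in (0:ℝ)..1, Real.sin (t*x)^2 * t^α :=
  (intervalIntegral.integral_of_le zero_le_one).symm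

lemma Hr_nonneg (α x : ℝ) : 0 ≤ Hr α x := by
  apply setIntegral_nonneg measurableSet_Ioc
  intro t ht
  have h0 : 0 ≤ t ^ α := Real.rpow_nonneg ht.1.le α
  positivity

lemma sin_sq_ge {u : ℝ} (h0 : 0 ≤ u) (h1 : u ≤ 1) : 9/16 * u^2 ≤ Real.sin u ^2 := by
  rcases eq_or_lt_of_le h0 with h|h
  · simp [← h]
  · have hs := Real.sin_gt_sub_cube h
    have hu2 : u^2 ≤ 1 := by nlinarith
    have hu3 : u^3 ≤ u := by nlinarith [mul_le_mul_of_nonneg_left hu2 h.le]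
    have h2 : (3/4)*u ≤ Real.sin u := by nlinarith
    nlinarith

lemma integral_rpow_from_zero (p : ℝ) (hp : -1 < p) (b : ℝ) :
    ∫ t in (0:ℝ)..b, t ^ p = b ^ (p+1) / (p+1) := by
  rw [integral_rpow (Or.inl hp), Real.zero_rpow (by linarith)]
  ring

lemma Hr_split (α : ℝ) (hα : -3 < α) (x : ℝ) {b : ℝ} (hb0 : 0 < b) (hb1 : b ≤ 1) :
    Hr α x = (∫ t in Ioc (0:ℝ) b, Real.sin (t*x)^2 * t^α)
      + ∫ t in Ioc b (1:ℝ), Real.sin (t*x)^2 * t^α := by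
  rw [Hr, ← setIntegral_union _ measurableSet_Ioc]
  · rw [Ioc_union_Ioc_eq_Ioc hb0.le hb1]
  · exact rint_integrableOn α hα x le_rfl hb1 hb0.le
  · exact rint_integrableOn α hα x hb0.le le_rfl hb1
  · rw [Set.disjoint_iff]
    rintro t ⟨⟨-, h1⟩, h2, -⟩
    exact absurd h1 (not_le.2 h2)

lemma Hr_lower (α : ℝ) (hα : -3 < α) {x b : ℝ} (hx : 0 ≤ x) (hb0 : 0 < b) (hb1 : b ≤ 1)
    (hbx : b * x ≤ 1) : 9/16 * x^2 * (b^(α+3) / (α+3)) ≤ Hr α x := by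
  rw [Hr_split α hα x hb0 hb1]
  have h2 : 0 ≤ ∫ t in Ioc b (1:ℝ), Real.sin (t*x)^2 * t^α := by
    apply setIntegral_nonneg measurableSet_Ioc
    intro t ht
    have h0 : 0 ≤ t ^ α := Real.rpow_nonneg (le_trans hb0.le ht.1.le) α
    positivity
  have h3 : ∫ t in Ioc (0:ℝ) b, 9/16 * x^2 * t^(α+2)
      ≤ ∫ t in Ioc (0:ℝ) b, Real.sin (t*x)^2 * t^α := by
    apply setIntegral_mono_on ((rpow_integrableOn (α+2) (by linarith)).const_mul _)
      (rint_integrableOn α hα x le_rfl hb1 hb0.le) measurableSet_Ioc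
    intro t ht
    obtain ⟨ht0, htb⟩ := ht
    have htx1 : t * x ≤ 1 := le_trans (mul_le_mul_of_nonneg_right htb hx) hbx
    have htx0 : 0 ≤ t * x := mul_nonneg ht0.le hx
    have h0 : 0 ≤ t ^ α := Real.rpow_nonneg ht0.le α
    calc 9/16 * x^2 * t^(α+2) = (9/16 * (t*x)^2) * t^α := by
          rw [Real.rpow_add ht0, Real.rpow_two]; ring
      _ ≤ Real.sin (t*x)^2 * t^α :=
          mul_le_mul_of_nonneg_right (sin_sq_ge htx0 htx1) h0
  have h4 : ∫ t in Ioc (0:ℝ) b, 9/16 * x^2 * t^(α+2) = 9/16 * x^2 * (b^(α+3)/(α+3)) := by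
    rw [← intervalIntegral.integral_of_le hb0.le, intervalIntegral.integral_const_mul,
      integral_rpow_from_zero (α+2) (by linarith) b]
    ring_nf
  linarith

lemma Hr_upper_piece (α : ℝ) (hα : -3 < α) {x b : ℝ} (hb0 : 0 < b) (hb1 : b ≤ 1) :
    ∫ t in Ioc (0:ℝ) b, Real.sin (t*x)^2 * t^α ≤ x^2 * (b^(α+3) / (α+3)) := by
  have h3 : ∫ t in Ioc (0:ℝ) b, Real.sin (t*x)^2 * t^α
      ≤ ∫ t in Ioc (0:ℝ) b, x^2 * t^(α+2) := by
    apply setIntegral_mono_on (rint_integrableOn α hα x le_rfl hb1 hb0.le)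
      ((rpow_integrableOn (α+2) (by linarith)).const_mul _) measurableSet_Ioc
    intro t ht
    exact sin_mul_sq_rpow_le α ht.1
  have h4 : ∫ t in Ioc (0:ℝ) b, x^2 * t^(α+2) = x^2 * (b^(α+3)/(α+3)) := by
    rw [← intervalIntegral.integral_of_le hb0.le, intervalIntegral.integral_const_mul,
      integral_rpow_from_zero (α+2) (by linarith) b,
      show α+2+1 = α+3 from by ring]
  linarith

lemma Hr_upper_1 (α : ℝ) (hα : -3 < α) (x : ℝ) : Hr α x ≤ x^2 / (α+3) := by
  have := Hr_upper_piece α hα (x := x) one_pos le_rfl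
  rw [Real.one_rpow] at this
  calc Hr α x ≤ x^2 * (1/(α+3)) := this
    _ = x^2/(α+3) := by ring

lemma Hr_upper_2 (α : ℝ) (hα3 : -3 < α) (hα1 : α < -1) {x : ℝ} (hx : 1 ≤ x) :
    Hr α x ≤ (1/(α+3) + 1/(-α-1)) * x^(-α-1) := by
  have hx0 : (0:ℝ) < x := lt_of_lt_of_le one_pos hx
  have hb0 : (0:ℝ) < 1/x := by positivity
  have hb1 : 1/x ≤ 1 := by rw [div_le_one hx0]; exact hx
  set A := x^(-α-1) with hA
  have hA1 : 1 ≤ A := Real.one_le_rpow hx (by linarith)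
  have hApos : (0:ℝ) < A := lt_of_lt_of_le one_pos hA1
  rw [Hr_split α hα3 x hb0 hb1]
  have hfirst : ∫ t in Ioc (0:ℝ) (1/x), Real.sin (t*x)^2 * t^α ≤ A/(α+3) := by
    have h := Hr_upper_piece α hα3 (x := x) hb0 hb1
    have hxx : x^2 * (1/x)^(α+3) = A := by
      rw [one_div, ← Real.rpow_neg_one x, ← Real.rpow_mul hx0.le, ← Real.rpow_natCast x 2,
        ← Real.rpow_add hx0, show ((2:ℕ):ℝ) + -1*(α+3) = -α-1 from by push_cast; ring, hA]
    have h4 : x^2 * ((1/x)^(α+3)/(α+3)) = A/(α+3) := by rw [← hxx]; ring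
    linarith
  have hsecond : ∫ t in Ioc (1/x) (1:ℝ), Real.sin (t*x)^2 * t^α ≤ A/(-α-1) := by
    have h3 : ∫ t in Ioc (1/x) (1:ℝ), Real.sin (t*x)^2 * t^α
        ≤ ∫ t in Ioc (1/x) (1:ℝ), t^α := by
      apply setIntegral_mono_on (rint_integrableOn α hα3 x hb0.le le_rfl hb1)
        _ measurableSet_Ioc
      · intro t ht
        have ht0 : 0 < t := lt_trans hb0 ht.1
        have h0 : 0 ≤ t ^ α := Real.rpow_nonneg ht0.le α
        have hs1 : Real.sin (t*x)^2 ≤ 1 := by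
          have h5 := Real.neg_one_le_sin (t*x)
          have h6 := Real.sin_le_one (t*x)
          nlinarith
        nlinarith
      · exact (intervalIntegrable_iff_integrableOn_Ioc_of_le hb1).1
          (intervalIntegral.intervalIntegrable_rpow (Or.inr (by
            rw [Set.uIcc_of_le hb1]; rintro ⟨hc, -⟩; exact absurd hc (not_le.2 hb0))))
    have h4 : ∫ t in Ioc (1/x) (1:ℝ), t^α = (1 - (1/x)^(α+1))/(α+1) := by
      rw [← intervalIntegral.integral_of_le hb1, integral_rpow (Or.inr ⟨by linarith,
        by rw [Set.uIcc_of_le hb1]; rintro ⟨hc, -⟩; exact absurd hc (not_le.2 hb0)⟩),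
        Real.one_rpow]
    have h5 : (1/x)^(α+1) = A := by
      rw [one_div, ← Real.rpow_neg_one x, ← Real.rpow_mul hx0.le, hA]
      ring_nf
    have e1 : (1 - A)/(α+1) = (A-1)/(-α-1) := by
      rw [div_eq_div_iff (by linarith : α+1 ≠ 0) (by linarith : -α-1 ≠ 0)]
      ring
    have e2 : (A-1)/(-α-1) ≤ A/(-α-1) :=
      (div_le_div_iff_of_pos_right (by linarith)).2 (by linarith)
    have h7 : ∫ t in Ioc (1/x) (1:ℝ), t^α ≤ A/(-α-1) := by
      rw [h4, h5]; linarith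
    linarith
  have hsum : A/(α+3) + A/(-α-1) = (1/(α+3) + 1/(-α-1)) * A := by ring
  linarith

lemma Hr_zero_bounds {x : ℝ} (hx : 1 ≤ x) : 1/4 ≤ Hr 0 x ∧ Hr 0 x ≤ 3/4 := by
  have hx0 : (0:ℝ) < x := lt_of_lt_of_le one_pos hx
  have hxne : x ≠ 0 := ne_of_gt hx0
  have h1 : Hr 0 x = 1/2 - Real.sin x * Real.cos x / (2*x) := by
    rw [Hr_eq_interval]
    have heq : ∀ t : ℝ, Real.sin (t*x)^2 * t^(0:ℝ) = (fun u => Real.sin u ^2) (t * x) := by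
      intro t; simp [Real.rpow_zero]
    rw [intervalIntegral.integral_congr (g := fun t : ℝ => (fun u => Real.sin u ^2) (t * x))
      (fun t _ => heq t)]
    rw [intervalIntegral.integral_comp_mul_right (fun u => Real.sin u ^2) hxne]
    rw [integral_sin_sq]
    simp only [zero_mul, one_mul, Real.sin_zero, Real.cos_zero, smul_eq_mul]
    field_simp
    ring
  have h2 : |Real.sin x * Real.cos x| ≤ 1/2 := by
    have hs2 := Real.sin_two_mul x
    have hb1 := Real.neg_one_le_sin (2*x)
    have hb2 := Real.sin_le_one (2*x)
    rw [abs_le]; constructor <;> nlinarith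
  have h3 : |Real.sin x * Real.cos x / (2*x)| ≤ 1/4 := by
    rw [abs_div, abs_of_pos (by positivity : (0:ℝ) < 2*x)]
    rw [div_le_iff₀ (by positivity)]
    nlinarith [abs_nonneg (Real.sin x * Real.cos x)]
  have h4 := abs_le.1 h3
  constructor <;> [linarith [h4.2]; linarith [h4.1]]


lemma x_sq_inv_rpow (α : ℝ) {x : ℝ} (hx0 : 0 < x) : x^2 * (1/x)^(α+3) = x^(-α-1) := by
  rw [one_div, ← Real.rpow_neg_one x, ← Real.rpow_mul hx0.le, ← Real.rpow_natCast x 2,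
    ← Real.rpow_add hx0, show ((2:ℕ):ℝ) + -1*(α+3) = -α-1 from by push_cast; ring]

lemma poly_le_exp (m : ℕ) {ε : ℝ} (hε : 0 < ε) :
    ∃ C : ℝ, 0 < C ∧ ∀ r : ℝ, 0 ≤ r → r^m ≤ C * Real.exp (ε*r) := by
  refine ⟨(m.factorial : ℝ)/ε^m, by positivity, fun r hr => ?_⟩
  have h1 : (ε*r)^m / (m.factorial : ℝ) ≤ Real.exp (ε*r) :=
    Real.pow_div_factorial_le_exp (ε*r) (mul_nonneg hε.le hr) m
  have h2 : (ε*r)^m ≤ (m.factorial : ℝ) * Real.exp (ε*r) := by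
    rw [div_le_iff₀ (by positivity : (0:ℝ) < (m.factorial : ℝ))] at h1
    linarith
  rw [mul_pow] at h2
  rw [div_mul_eq_mul_div, le_div_iff₀ (by positivity : (0:ℝ) < ε^m)]
  nlinarith [pow_pos hε m]

theorem stmt16 (γ : ℝ) (hγ : -(1/2 : ℝ) ≤ γ) :
    ∃ (ω : ℂ → ℂ) (c₁ c₂ : ℝ), 0 < c₁ ∧ c₁ ≤ c₂ ∧
      AnalyticOnNhd ℂ ω Set.univ ∧
      (∀ z : ℂ, ω (-z) = ω z) ∧
      (∀ ε > (0 : ℝ), ∃ c : ℝ, ∀ z : ℂ, ‖ω z‖ ≤ c * Real.exp ((2 + ε) * ‖z‖)) ∧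
      (∀ x : ℝ, 0 ≤ x → (ω (x : ℂ)).im = 0 ∧ 0 ≤ (ω (x : ℂ)).re) ∧
      (∀ x : ℝ, 0 ≤ x → x ≤ 1 →
        c₁ * x ^ (2 * (⌊γ + 1/2⌋ : ℝ) + 2) ≤ (ω (x : ℂ)).re ∧
          (ω (x : ℂ)).re ≤ c₂ * x ^ (2 * (⌊γ + 1/2⌋ : ℝ) + 2)) ∧
      (∀ x : ℝ, 1 ≤ x →
        c₁ * x ^ (2 * γ + 1) ≤ (ω (x : ℂ)).re ∧ (ω (x : ℂ)).re ≤ c₂ * x ^ (2 * γ + 1)) := by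
  have hkz0 : (0:ℤ) ≤ ⌊γ + 1/2⌋ := Int.floor_nonneg.2 (by linarith)
  set k : ℕ := ⌊γ + 1/2⌋.toNat with hk
  have hkr : ((k:ℝ)) = ((⌊γ + 1/2⌋ : ℤ):ℝ) := by exact_mod_cast Int.toNat_of_nonneg hkz0
  have hfl : ((⌊γ + 1/2⌋ : ℤ):ℝ) ≤ γ + 1/2 := Int.floor_le _
  have hfu : γ + 1/2 < ((⌊γ + 1/2⌋ : ℤ):ℝ) + 1 := Int.lt_floor_add_one _
  set s : ℝ := 2*γ + 1 - 2*k with hs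
  have hs0 : 0 ≤ s := by rw [hs, hkr]; linarith
  have hs2 : s < 2 := by rw [hs, hkr]; linarith
  -- choose α and the large-x bounds
  obtain ⟨α, L, U, hα3, hα0, hLpos, hbnd⟩ :
      ∃ (α L U : ℝ), -3 < α ∧ α ≤ 0 ∧ 0 < L ∧
        ∀ x : ℝ, 1 ≤ x → L * x^s ≤ Hr α x ∧ Hr α x ≤ U * x^s := by
    rcases eq_or_lt_of_le hs0 with h0|hpos
    · refine ⟨0, 1/4, 3/4, by norm_num, le_rfl, by norm_num, fun x hx => ?_⟩
      rw [← h0, Real.rpow_zero, mul_one, mul_one]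
      exact Hr_zero_bounds hx
    · refine ⟨-1-s, 9/16 * (1/(-1-s+3)), 1/(-1-s+3) + 1/s, by linarith, by linarith,
        by (have h2s : (0:ℝ) < -1-s+3 := by linarith); positivity, fun x hx => ?_⟩
      have hx0 : (0:ℝ) < x := lt_of_lt_of_le one_pos hx
      constructor
      · have hlow := Hr_lower (-1-s) (by linarith) (x := x) (b := 1/x) hx0.le (by positivity)
          (by rw [div_le_one hx0]; exact hx) (by rw [one_div, inv_mul_cancel₀ (ne_of_gt hx0)])
        have he : 9/16 * x^2 * ((1/x)^(-1-s+3)/(-1-s+3)) = 9/16 * (1/(-1-s+3)) * x^s := by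
          have := x_sq_inv_rpow (-1-s) hx0
          rw [show -(-1-s)-1 = s from by ring] at this
          rw [← this]; ring
        linarith [he.symm.le]
      · have hup := Hr_upper_2 (-1-s) (by linarith) (by linarith) hx
        rw [show -(-1-s)-1 = s from by ring] at hup
        linarith
  have ha3 : (0:ℝ) < α + 3 := by linarith
  refine ⟨fun z => z^(2*k) * Hf α z, min (9/16 * (1/(α+3))) L, max (1/(α+3)) U,
    lt_min (by positivity) hLpos,
    le_trans (min_le_left _ _) (le_trans
      (by nlinarith [one_div_pos.2 ha3] : 9/16 * (1/(α+3)) ≤ 1/(α+3)) (le_max_left _ _)),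
    ?_, ?_, ?_, ?_, ?_, ?_⟩
  -- analytic
  · intro z _
    exact ((analyticAt_id.pow _).mul ((Hf_analytic α hα3) z trivial))
  -- even
  · intro z
    show (-z)^(2*k) * Hf α (-z) = z^(2*k) * Hf α z
    rw [Hf_even]
    congr 1
    rw [pow_mul, pow_mul, neg_sq]
  -- exponential type
  · intro ε hε
    obtain ⟨C, hC0, hC⟩ := poly_le_exp (2*k+2) hε
    refine ⟨C * (1/(α+3)), fun z => ?_⟩
    have h1 : ‖z^(2*k) * Hf α z‖ ≤ ‖z‖^(2*k) * ((‖z‖ * Real.exp ‖z‖)^2/(α+3)) := by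
      rw [norm_mul, norm_pow]
      exact mul_le_mul_of_nonneg_left (norm_Hf_le α hα3 z) (by positivity)
    have h2 : ‖z‖^(2*k) * ((‖z‖ * Real.exp ‖z‖)^2/(α+3))
        = ‖z‖^(2*k+2) * (Real.exp ‖z‖^2 * (1/(α+3))) := by
      rw [pow_add]; ring
    have h3 : Real.exp ‖z‖^2 = Real.exp (2*‖z‖) := by
      rw [← Real.exp_nat_mul]; norm_num
    have h4 : ‖z‖^(2*k+2) ≤ C * Real.exp (ε*‖z‖) := hC ‖z‖ (norm_nonneg z)
    have h5 : Real.exp (ε*‖z‖) * Real.exp (2*‖z‖) = Real.exp ((2+ε)*‖z‖) := by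
      rw [← Real.exp_add]; ring_nf
    calc ‖z^(2*k) * Hf α z‖ ≤ ‖z‖^(2*k+2) * (Real.exp (2*‖z‖) * (1/(α+3))) := by
          rw [← h3]; linarith [h1, h2.le]
      _ ≤ (C * Real.exp (ε*‖z‖)) * (Real.exp (2*‖z‖) * (1/(α+3))) := by
          apply mul_le_mul_of_nonneg_right h4 (by positivity)
      _ = C * (1/(α+3)) * Real.exp ((2+ε)*‖z‖) := by rw [← h5]; ring
  -- real and nonneg
  · intro x hx
    beta_reduce
    have hre : ((x:ℂ)^(2*k) * Hf α x) = (((x^(2*k) * Hr α x : ℝ)) : ℂ) := by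
      rw [Hf_real]; push_cast; ring
    rw [hre]
    constructor
    · exact Complex.ofReal_im _
    · rw [Complex.ofReal_re]
      exact mul_nonneg (by positivity) (Hr_nonneg α x)
  -- bounds on [0,1]
  · intro x hx0 hx1
    beta_reduce
    have hre : ((x:ℂ)^(2*k) * Hf α x) = (((x^(2*k) * Hr α x : ℝ)) : ℂ) := by
      rw [Hf_real]; push_cast; ring
    rw [hre, Complex.ofReal_re]
    have hxp : x ^ (2 * ((⌊γ + 1/2⌋ : ℤ):ℝ) + 2) = x^(2*k+2) := by
      rw [← hkr, show 2*((k:ℕ):ℝ)+2 = ((2*k+2 : ℕ):ℝ) from by push_cast; ring,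
        Real.rpow_natCast]
    rw [hxp]
    have hlow := Hr_lower α hα3 (x := x) (b := 1) hx0 one_pos le_rfl (by rw [one_mul]; exact hx1)
    rw [Real.one_rpow] at hlow
    have hup := Hr_upper_1 α hα3 x
    have hxk : (0:ℝ) ≤ x^(2*k) := by positivity
    have hpowsplit : x^(2*k+2) = x^(2*k) * x^2 := by rw [pow_add]
    constructor
    · calc min (9/16 * (1/(α+3))) L * x^(2*k+2) ≤ 9/16 * (1/(α+3)) * x^(2*k+2) :=
            mul_le_mul_of_nonneg_right (min_le_left _ _) (by positivity)
        _ = x^(2*k) * (9/16 * x^2 * (1/(α+3))) := by rw [hpowsplit]; ring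
        _ ≤ x^(2*k) * Hr α x := mul_le_mul_of_nonneg_left (by linarith) hxk
    · calc x^(2*k) * Hr α x ≤ x^(2*k) * (x^2/(α+3)) := mul_le_mul_of_nonneg_left hup hxk
        _ = 1/(α+3) * x^(2*k+2) := by rw [hpowsplit]; ring
        _ ≤ max (1/(α+3)) U * x^(2*k+2) :=
            mul_le_mul_of_nonneg_right (le_max_left _ _) (by positivity)
  -- bounds on [1, ∞)
  · intro x hx
    have hx0 : (0:ℝ) < x := lt_of_lt_of_le one_pos hx
    beta_reduce
    have hre : ((x:ℂ)^(2*k) * Hf α x) = (((x^(2*k) * Hr α x : ℝ)) : ℂ) := by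
      rw [Hf_real]; push_cast; ring
    rw [hre, Complex.ofReal_re]
    have hxp : x ^ (2*γ + 1) = x^(2*k) * x^s := by
      rw [show 2*γ+1 = (((2*k:ℕ):ℝ)) + s from by rw [hs]; push_cast; ring,
        Real.rpow_add hx0, Real.rpow_natCast]
    rw [hxp]
    obtain ⟨hbl, hbu⟩ := hbnd x hx
    have hxk : (0:ℝ) ≤ x^(2*k) := by positivity
    have hxs : (0:ℝ) ≤ x^s := Real.rpow_nonneg hx0.le s
    constructor
    · calc min (9/16 * (1/(α+3))) L * (x^(2*k) * x^s) ≤ L * (x^(2*k) * x^s) :=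
            mul_le_mul_of_nonneg_right (min_le_right _ _) (by positivity)
        _ = x^(2*k) * (L * x^s) := by ring
        _ ≤ x^(2*k) * Hr α x := mul_le_mul_of_nonneg_left hbl hxk
    · calc x^(2*k) * Hr α x ≤ x^(2*k) * (U * x^s) := mul_le_mul_of_nonneg_left hbu hxk
        _ = U * (x^(2*k) * x^s) := by ring
        _ ≤ max (1/(α+3)) U * (x^(2*k) * x^s) :=
            mul_le_mul_of_nonneg_right (le_max_right _ _) (by positivity)

end Stmt16
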